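/- arXiv:2602.06913 — 2 statements merged into one kernel-verified Lean document; each statement's English description precedes it below -/
import Mathlib

section
/- Let U be a unitary on H_L ⊗ H_C ⊗ H_R satisfying both the left-wall and right-wall conditions. Let M̄_L be the algebra generated by {Ad_U^t(End(H_L) ⊗ 1_{CR}) : t ≥ 0} and M̄_R the algebra generated by {Ad_U^t(1_{LC} ⊗ End(H_R)) : t ≥ 0}. Then every element of M̄_L commutes with every element of M̄_R. -/
/-- The embedding of an operator on `H_L` as `m ⊗ 1_{CR}` on `H_L ⊗ H_C ⊗ H_R`. -/
def embL {l c r : Type*} [DecidableEq c] [DecidableEq r]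
    (m : Matrix l l ℂ) : Matrix (l × c × r) (l × c × r) ℂ :=
  fun p q => m p.1 q.1 * (if p.2 = q.2 then (1 : ℂ) else 0)

/-- The embedding of an operator on `H_L ⊗ H_C` as `m' ⊗ 1_R`. -/
def embLC {l c r : Type*} [DecidableEq r]
    (m : Matrix (l × c) (l × c) ℂ) : Matrix (l × c × r) (l × c × r) ℂ :=
  fun p q => m (p.1, p.2.1) (q.1, q.2.1) * (if p.2.2 = q.2.2 then (1 : ℂ) else 0)

/-- The embedding of an operator on `H_R` as `1_{LC} ⊗ n`. -/
def embR {l c r : Type*} [DecidableEq l] [DecidableEq c]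
    (n : Matrix r r ℂ) : Matrix (l × c × r) (l × c × r) ℂ :=
  fun p q => (if (p.1, p.2.1) = (q.1, q.2.1) then (1 : ℂ) else 0) * n p.2.2 q.2.2

/-- The embedding of an operator on `H_C ⊗ H_R` as `1_L ⊗ n'`. -/
def embCR {l c r : Type*} [DecidableEq l]
    (n : Matrix (c × r) (c × r) ℂ) : Matrix (l × c × r) (l × c × r) ℂ :=
  fun p q => (if p.1 = q.1 then (1 : ℂ) else 0) * n p.2 q.2

section aux
variable {l c r : Type*} [Fintype l] [DecidableEq l] [Fintype c] [DecidableEq c]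
    [Fintype r] [DecidableEq r]

lemma embL_mul_embCR (m : Matrix l l ℂ) (n : Matrix (c × r) (c × r) ℂ) :
    embL (c := c) (r := r) m * embCR n = embCR n * embL m := by
  ext p q
  simp only [Matrix.mul_apply, embL, embCR, Fintype.sum_prod_type]
  simp [Prod.ext_iff, ite_and, mul_ite, ite_mul, Finset.sum_ite_eq, Finset.sum_ite_eq', mul_comm]

lemma embLC_mul_embR (m : Matrix (l × c) (l × c) ℂ) (n : Matrix r r ℂ) :
    embLC (r := r) m * embR n = embR n * embLC m := by
  ext p q
  simp only [Matrix.mul_apply, embLC, embR, Fintype.sum_prod_type, Prod.mk.injEq]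
  simp [Prod.ext_iff, ite_and, mul_ite, ite_mul, Finset.sum_ite_eq, Finset.sum_ite_eq', mul_comm]

set_option linter.unusedSectionVars false

lemma star_embL (m : Matrix l l ℂ) :
    star (embL (c := c) (r := r) m) = embL (Matrix.conjTranspose m) := by
  ext p q
  simp [embL, Matrix.star_apply, Matrix.conjTranspose_apply, eq_comm, apply_ite (star : ℂ → ℂ)]

lemma star_embR (n : Matrix r r ℂ) :
    star (embR (l := l) (c := c) n) = embR (Matrix.conjTranspose n) := by
  ext p q
  simp [embR, Matrix.star_apply, Matrix.conjTranspose_apply, eq_comm, apply_ite (star : ℂ → ℂ)]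

end aux

/-- if the unitary U satisfies both the left-wall and right-wall
conditions, then the algebra M̄_L generated by the time-evolved left-local
operators commutes elementwise with the algebra M̄_R generated by the
time-evolved right-local operators. -/
theorem evolved_left_right_algebras_commute
    {l c r : Type*} [Fintype l] [DecidableEq l] [Fintype c] [DecidableEq c]
    [Fintype r] [DecidableEq r]
    (U : Matrix (l × c × r) (l × c × r) ℂ)
    (hU : U ∈ Matrix.unitaryGroup (l × c × r) ℂ)
    (hleft : ∀ (t : ℕ) (m : Matrix l l ℂ),
      ∃ m' : Matrix (l × c) (l × c) ℂ,
        U ^ t * embL m * (star U) ^ t = embLC m')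
    (hright : ∀ (t : ℕ) (n : Matrix r r ℂ),
      ∃ n' : Matrix (c × r) (c × r) ℂ,
        U ^ t * embR n * (star U) ^ t = embCR n') :
    ∀ x ∈ StarAlgebra.adjoin ℂ
        {x : Matrix (l × c × r) (l × c × r) ℂ |
          ∃ (t : ℕ) (m : Matrix l l ℂ), x = U ^ t * embL m * (star U) ^ t},
      ∀ y ∈ StarAlgebra.adjoin ℂ
          {y : Matrix (l × c × r) (l × c × r) ℂ |
            ∃ (t : ℕ) (n : Matrix r r ℂ), y = U ^ t * embR n * (star U) ^ t},
        x * y = y * x := by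
  set S := {x : Matrix (l × c × r) (l × c × r) ℂ |
      ∃ (t : ℕ) (m : Matrix l l ℂ), x = U ^ t * embL m * (star U) ^ t} with hS
  set T := {y : Matrix (l × c × r) (l × c × r) ℂ |
      ∃ (t : ℕ) (n : Matrix r r ℂ), y = U ^ t * embR n * (star U) ^ t} with hT
  -- (star U)^t * U^t = 1
  have hinv : ∀ t : ℕ, (star U) ^ t * U ^ t = 1 := fun t => by
    rw [← star_pow]
    exact (Unitary.mem_iff.mp (pow_mem hU t)).1
  -- collapse lemma
  have collapse : ∀ (t : ℕ) (A B : Matrix (l × c × r) (l × c × r) ℂ),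
      (U ^ t * A * (star U) ^ t) * (U ^ t * B * (star U) ^ t)
        = U ^ t * (A * B) * (star U) ^ t := fun t A B => by
    calc (U ^ t * A * (star U) ^ t) * (U ^ t * B * (star U) ^ t)
        = U ^ t * (A * (((star U) ^ t * U ^ t) * (B * (star U) ^ t))) := by
          simp only [mul_assoc]
      _ = U ^ t * (A * B) * (star U) ^ t := by rw [hinv]; simp only [one_mul, mul_assoc]
  -- shifting lemma for embR
  have shiftR : ∀ (t d : ℕ) (n : Matrix r r ℂ),
      U ^ (t + d) * embR n * (star U) ^ (t + d)
        = U ^ t * (U ^ d * embR n * (star U) ^ d) * (star U) ^ t := fun t d n => by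
    have h2 : (star U) ^ (t + d) = (star U) ^ d * (star U) ^ t := by rw [add_comm, pow_add]
    rw [pow_add, h2]
    simp only [mul_assoc]
  have shiftL : ∀ (t d : ℕ) (m : Matrix l l ℂ),
      U ^ (t + d) * embL m * (star U) ^ (t + d)
        = U ^ t * (U ^ d * embL m * (star U) ^ d) * (star U) ^ t := fun t d m => by
    have h2 : (star U) ^ (t + d) = (star U) ^ d * (star U) ^ t := by rw [add_comm, pow_add]
    rw [pow_add, h2]
    simp only [mul_assoc]
  -- key: generators commute
  have key : ∀ (t₁ t₂ : ℕ) (m : Matrix l l ℂ) (n : Matrix r r ℂ),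
      (U ^ t₁ * embL m * (star U) ^ t₁) * (U ^ t₂ * embR n * (star U) ^ t₂)
        = (U ^ t₂ * embR n * (star U) ^ t₂) * (U ^ t₁ * embL m * (star U) ^ t₁) := by
    intro t₁ t₂ m n
    rcases le_total t₁ t₂ with h | h
    · obtain ⟨d, rfl⟩ := Nat.exists_eq_add_of_le h
      obtain ⟨n', hn'⟩ := hright d n
      rw [shiftR t₁ d n, hn', collapse, collapse, embL_mul_embCR]
    · obtain ⟨d, rfl⟩ := Nat.exists_eq_add_of_le h
      obtain ⟨m', hm'⟩ := hleft d m
      rw [shiftL t₂ d m, hm', collapse, collapse, embLC_mul_embR]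
  -- stars of generators are generators
  have starS : ∀ a ∈ S, star a ∈ S := by
    rintro a ⟨t, m, rfl⟩
    exact ⟨t, Matrix.conjTranspose m, by
      simp only [star_mul, star_pow, star_star, star_embL, mul_assoc]⟩
  have starT : ∀ a ∈ T, star a ∈ T := by
    rintro a ⟨t, n, rfl⟩
    exact ⟨t, Matrix.conjTranspose n, by
      simp only [star_mul, star_pow, star_star, star_embR, mul_assoc]⟩
  -- every element of adjoin T centralizes S
  have step1 : StarAlgebra.adjoin ℂ T ≤ StarSubalgebra.centralizer ℂ S := by
    apply StarAlgebra.adjoin_le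
    intro g hg
    rw [SetLike.mem_coe, StarSubalgebra.mem_centralizer_iff]
    intro a ha
    obtain ⟨t₂, n, rfl⟩ := hg
    constructor
    · obtain ⟨t₁, m, rfl⟩ := ha
      exact key t₁ t₂ m n
    · obtain ⟨t₁, m₁, hsa⟩ := starS a ha
      rw [hsa]
      exact key t₁ t₂ m₁ n
  -- conclude
  intro x hx y hy
  have hy' := step1 hy
  rw [StarSubalgebra.mem_centralizer_iff] at hy'
  -- x ∈ adjoin S; show x commutes with y by adjoin induction? Instead:
  have step2 : StarAlgebra.adjoin ℂ S ≤
      StarSubalgebra.centralizer ℂ (StarAlgebra.adjoin ℂ T : Set _) := by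
    apply StarAlgebra.adjoin_le
    intro a ha
    rw [SetLike.mem_coe, StarSubalgebra.mem_centralizer_iff]
    intro g hg
    have hg' := step1 (SetLike.mem_coe.mp hg)
    rw [StarSubalgebra.mem_centralizer_iff] at hg'
    have h1 := (hg' a ha).1
    have hgs : star g ∈ StarAlgebra.adjoin ℂ T := star_mem (SetLike.mem_coe.mp hg)
    have hsg' := step1 hgs
    rw [StarSubalgebra.mem_centralizer_iff] at hsg'
    exact ⟨h1.symm, (hsg' a ha).1.symm⟩
  have hx' := step2 hx
  rw [StarSubalgebra.mem_centralizer_iff] at hx'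
  exact ((hx' y hy).1).symm
end

section
/- Let U be a unitary on a bipartite finite-dimensional Hilbert space H_P ⊗ H_Q such that for every t ≥ 0, U^t maps product operators to product operators in the sense that Ad_U^t(End(H_P) ⊗ 1) ⊆ End(H_P) ⊗ 1 and Ad_U^t(1 ⊗ End(H_Q)) ⊆ 1 ⊗ End(H_Q). Then U = V ⊗ W for some unitaries V on H_P and W on H_Q, up to a global phase. -/
/-!
Conjugation by `U` restricts to unital ⋆-endomorphisms of `Matrix p p ℂ` and of `Matrix q q ℂ`,
seen inside `Matrix (p × q) (p × q) ℂ` through the injective maps `a ↦ a ⊗ₖ 1` and `b ↦ 1 ⊗ₖ b`.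
Every unital ⋆-endomorphism `Φ` of a full matrix algebra is conjugation by a unitary
(Skolem–Noether): the projection `Φ (E i₀ i₀)` is nonzero because `Φ` is unital, so some `v`
has `⟪v, Φ (E i₀ i₀) v⟫ = 1`, and the matrix whose `k`-th column is `Φ (E k i₀) v` intertwines `Φ`
with the identity and has orthonormal columns. Hence `U` and `V ⊗ₖ W` induce the same conjugation
on every `a ⊗ₖ b`, in particular on every matrix unit, so `star (V ⊗ₖ W) * U` is a scalar, of
modulus one because it is unitary.
-/

open Kronecker Matrix

theorem StarAlgHom.exists_comp_eq_of_injective {R A B C : Type*} [CommSemiring R] [StarRing R]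
    [Semiring A] [Algebra R A] [StarRing A] [Semiring B] [Algebra R B] [StarRing B]
    [StarModule R B] [Semiring C] [Algebra R C] [StarRing C]
    (ι : C →⋆ₐ[R] B) (hι : Function.Injective ι) (f : A →⋆ₐ[R] B) (hf : ∀ a, f a ∈ ι.range) :
    ∃ g : A →⋆ₐ[R] C, ∀ a, ι (g a) = f a :=
  ⟨((StarAlgEquiv.ofInjective ι hι).symm : ι.range →⋆ₐ[R] C).comp (f.codRestrict _ hf), fun a =>
    congrArg Subtype.val ((StarAlgEquiv.ofInjective ι hι).apply_symm_apply ⟨f a, hf a⟩)⟩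

namespace Matrix

section Kronecker

variable {m n R : Type*} [Fintype m] [DecidableEq m] [Fintype n] [DecidableEq n]
  [CommSemiring R] [StarRing R]

variable (n) in
def kroneckerOneStarAlgHom : Matrix m m R →⋆ₐ[R] Matrix (m × n) (m × n) R where
  toFun a := a ⊗ₖ 1
  map_one' := one_kronecker_one
  map_mul' a b := by rw [← mul_kronecker_mul, one_mul]
  map_zero' := zero_kronecker _
  map_add' a b := add_kronecker a b 1
  commutes' r := by
    simp only [Algebra.algebraMap_eq_smul_one, smul_kronecker, one_kronecker_one]
  map_star' a := by
    simp only [star_eq_conjTranspose, conjTranspose_kronecker, conjTranspose_one]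

variable (m) in
def oneKroneckerStarAlgHom : Matrix n n R →⋆ₐ[R] Matrix (m × n) (m × n) R where
  toFun b := 1 ⊗ₖ b
  map_one' := one_kronecker_one
  map_mul' a b := by rw [← mul_kronecker_mul, one_mul]
  map_zero' := kronecker_zero _
  map_add' a b := kronecker_add 1 a b
  commutes' r := by
    simp only [Algebra.algebraMap_eq_smul_one, kronecker_smul, one_kronecker_one]
  map_star' a := by
    simp only [star_eq_conjTranspose, conjTranspose_kronecker, conjTranspose_one]

@[simp]
theorem kroneckerOneStarAlgHom_apply (a : Matrix m m R) : kroneckerOneStarAlgHom n a = a ⊗ₖ 1 :=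
  rfl

@[simp]
theorem oneKroneckerStarAlgHom_apply (b : Matrix n n R) : oneKroneckerStarAlgHom m b = 1 ⊗ₖ b :=
  rfl

theorem kroneckerOneStarAlgHom_injective [Nonempty n] :
    Function.Injective (kroneckerOneStarAlgHom n : Matrix m m R →⋆ₐ[R] _) := by
  intro a b h
  obtain ⟨k⟩ := ‹Nonempty n›
  ext i j
  simpa using congrFun (congrFun h (i, k)) (j, k)

theorem oneKroneckerStarAlgHom_injective [Nonempty m] :
    Function.Injective (oneKroneckerStarAlgHom m : Matrix n n R →⋆ₐ[R] _) := by
  intro a b h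
  obtain ⟨k⟩ := ‹Nonempty m›
  ext i j
  simpa using congrFun (congrFun h (k, i)) (k, j)

theorem conj_kronecker_eq_of_conj_kronecker_one {U : Matrix (m × n) (m × n) R}
    (hU : U ∈ unitary (Matrix (m × n) (m × n) R)) {V : Matrix m m R} {W : Matrix n n R}
    (hV : ∀ a, U * (a ⊗ₖ 1) * star U = (V * a * star V) ⊗ₖ 1)
    (hW : ∀ b, U * (1 ⊗ₖ b) * star U = 1 ⊗ₖ (W * b * star W)) (a : Matrix m m R)
    (b : Matrix n n R) : U * (a ⊗ₖ b) * star U = (V ⊗ₖ W) * (a ⊗ₖ b) * star (V ⊗ₖ W) := by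
  have hsplit : a ⊗ₖ b = (a ⊗ₖ 1) * (1 ⊗ₖ b) := by rw [← mul_kronecker_mul, mul_one, one_mul]
  calc U * (a ⊗ₖ b) * star U = (U * (a ⊗ₖ 1) * star U) * (U * (1 ⊗ₖ b) * star U) := by
        rw [hsplit]; exact map_mul (Unitary.conjStarAlgAut R _ ⟨U, hU⟩) _ _
    _ = (V ⊗ₖ W) * (a ⊗ₖ b) * star (V ⊗ₖ W) := by
        rw [hV, hW, ← mul_kronecker_mul, mul_one, one_mul, star_eq_conjTranspose (V ⊗ₖ W),
          conjTranspose_kronecker, mul_kronecker_mul, mul_kronecker_mul]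
        rfl

end Kronecker

section SkolemNoether

variable {n 𝕜 : Type*} [Fintype n] [DecidableEq n] [RCLike 𝕜]

open scoped ComplexOrder in
theorem exists_star_dotProduct_mulVec_eq_one {P : Matrix n n 𝕜} (hP : Pᴴ * P = P) (h0 : P ≠ 0) :
    ∃ v, star v ⬝ᵥ (P *ᵥ v) = 1 := by
  obtain ⟨w, hw⟩ : ∃ w, P *ᵥ w ≠ 0 := by
    by_contra! h
    exact h0 (ext_of_mulVec_single fun i => by rw [h, zero_mulVec])
  obtain ⟨s, hs, hsw⟩ := RCLike.pos_iff_exists_ofReal.mp (dotProduct_star_self_pos_iff.mpr hw)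
  refine ⟨(√s)⁻¹ • w, ?_⟩
  calc star ((√s)⁻¹ • w) ⬝ᵥ (P *ᵥ ((√s)⁻¹ • w))
      = (√s)⁻¹ • (√s)⁻¹ • (star (P *ᵥ w) ⬝ᵥ (P *ᵥ w)) := by
        rw [star_mulVec, ← dotProduct_mulVec, mulVec_mulVec, hP]
        simp [mulVec_smul, star_smul, dotProduct_smul, smul_dotProduct]
    _ = 1 := by
        rw [← hsw, smul_smul, RCLike.real_smul_eq_coe_mul, ← RCLike.ofReal_mul,
          ← RCLike.ofReal_one, ← mul_inv, Real.mul_self_sqrt hs.le, inv_mul_cancel₀ hs.ne']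

section Intertwiner

variable (Φ : Matrix n n 𝕜 →⋆ₐ[𝕜] Matrix n n 𝕜)

theorem map_single_mul_map_single (i j k l : n) :
    Φ (single i j 1) * Φ (single k l 1) = if j = k then Φ (single i l 1) else 0 := by
  rw [← map_mul]
  split_ifs with h
  · rw [h, single_mul_single_same, one_mul]
  · rw [single_mul_single_of_ne _ _ _ _ h, map_zero]

theorem conjTranspose_map_single (i j : n) : (Φ (single i j 1))ᴴ = Φ (single j i 1) := by
  rw [← star_eq_conjTranspose, ← map_star, star_eq_conjTranspose, conjTranspose_single, star_one]

def intertwiner (i₀ : n) (v : n → 𝕜) : Matrix n n 𝕜 := of fun x k => (Φ (single k i₀ 1) *ᵥ v) x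

theorem map_mul_intertwiner (i₀ : n) (v : n → 𝕜) (a : Matrix n n 𝕜) :
    Φ a * intertwiner Φ i₀ v = intertwiner Φ i₀ v * a := by
  induction a using Matrix.induction_on' with
  | h_zero => simp
  | h_add a b ha hb => rw [map_add, add_mul, ha, hb, mul_add]
  | h_std_basis i j c =>
    have hc : single i j c = c • single i j 1 := by rw [smul_single, smul_eq_mul, mul_one]
    rw [hc, map_smul, smul_mul_assoc, mul_smul_comm]
    congr 1
    ext x k
    change (Φ (single i j 1) *ᵥ (Φ (single k i₀ 1) *ᵥ v)) x = _
    rw [mulVec_mulVec, map_single_mul_map_single]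
    by_cases h : j = k
    · subst h; simp [intertwiner]
    · simp [h, Ne.symm h]

theorem conjTranspose_intertwiner_mul_intertwiner (i₀ : n) (v : n → 𝕜) :
    (intertwiner Φ i₀ v)ᴴ * intertwiner Φ i₀ v = (star v ⬝ᵥ (Φ (single i₀ i₀ 1) *ᵥ v)) • 1 := by
  ext k l
  change star (Φ (single k i₀ 1) *ᵥ v) ⬝ᵥ (Φ (single l i₀ 1) *ᵥ v) = _
  rw [star_mulVec, ← dotProduct_mulVec, mulVec_mulVec, conjTranspose_map_single,
    map_single_mul_map_single]
  by_cases h : k = l <;> simp [h]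

end Intertwiner

theorem exists_mem_unitaryGroup_conj_eq (Φ : Matrix n n 𝕜 →⋆ₐ[𝕜] Matrix n n 𝕜) :
    ∃ V ∈ unitaryGroup n 𝕜, ∀ a, Φ a = V * a * star V := by
  rcases isEmpty_or_nonempty n with hn | hn
  · exact ⟨1, one_mem _, fun a => Subsingleton.elim _ _⟩
  obtain ⟨i₀⟩ := id hn
  have hP : (Φ (single i₀ i₀ 1))ᴴ * Φ (single i₀ i₀ 1) = Φ (single i₀ i₀ 1) := by
    rw [conjTranspose_map_single, map_single_mul_map_single, if_pos rfl]
  have hP0 : Φ (single i₀ i₀ 1) ≠ 0 := by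
    intro h
    refine one_ne_zero (α := Matrix n n 𝕜) ?_
    rw [← map_one Φ, ← sum_single_one, map_sum]
    refine Finset.sum_eq_zero fun k _ => ?_
    have hk : single k k (1 : 𝕜) = single k i₀ 1 * single i₀ i₀ 1 * single i₀ k 1 := by simp
    rw [hk, map_mul, map_mul, h, mul_zero, zero_mul]
  obtain ⟨v, hv⟩ := exists_star_dotProduct_mulVec_eq_one hP hP0
  have hV : intertwiner Φ i₀ v ∈ unitaryGroup n 𝕜 := by
    rw [mem_unitaryGroup_iff', star_eq_conjTranspose, conjTranspose_intertwiner_mul_intertwiner,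
      hv, one_smul]
  refine ⟨_, hV, fun a => ?_⟩
  rw [← map_mul_intertwiner, mul_assoc, mem_unitaryGroup_iff.mp hV, mul_one]

theorem exists_mem_unitaryGroup_conj_eq_of_conj_mem_range {B : Type*} [Ring B] [StarRing B]
    [Algebra 𝕜 B] [StarModule 𝕜 B] (ι : Matrix n n 𝕜 →⋆ₐ[𝕜] B) (hι : Function.Injective ι)
    {u : B} (hu : u ∈ unitary B) (h : ∀ a, ∃ b, u * ι a * star u = ι b) :
    ∃ V ∈ unitaryGroup n 𝕜, ∀ a, u * ι a * star u = ι (V * a * star V) := by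
  obtain ⟨Φ, hΦ⟩ := ι.exists_comp_eq_of_injective hι
    ((Unitary.conjStarAlgAut 𝕜 B ⟨u, hu⟩ : B →⋆ₐ[𝕜] B).comp ι) fun a =>
      (h a).imp fun _ hb => hb.symm
  obtain ⟨V, hV, hΦV⟩ := exists_mem_unitaryGroup_conj_eq Φ
  exact ⟨V, hV, fun a => by rw [← hΦV, hΦ]; rfl⟩

theorem exists_norm_eq_one_smul_of_conj_single_eq {U T : Matrix n n 𝕜}
    (hU : U ∈ unitaryGroup n 𝕜) (hT : T ∈ unitaryGroup n 𝕜)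
    (h : ∀ i j, U * single i j 1 * star U = T * single i j 1 * star T) :
    ∃ c : 𝕜, ‖c‖ = 1 ∧ U = c • T := by
  rcases isEmpty_or_nonempty n with hn | hn
  · exact ⟨1, norm_one, Subsingleton.elim _ _⟩
  have hcomm : ∀ i j, Commute (single i j 1) (star T * U) := fun i j =>
    calc single i j 1 * (star T * U)
        = star T * (T * single i j 1 * star T) * U := by
          simp only [← mul_assoc, mem_unitaryGroup_iff'.mp hT, one_mul]
      _ = star T * (U * single i j 1 * star U) * U := by rw [h]
      _ = star T * U * single i j 1 := by
          simp only [mul_assoc, mem_unitaryGroup_iff'.mp hU, mul_one]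
  obtain ⟨c, hc⟩ := mem_range_scalar_of_commute_single fun i j _ => hcomm i j
  have hUT : U = c • T := by
    rw [← one_mul U, ← mem_unitaryGroup_iff.mp hT, mul_assoc, ← hc, scalar_apply,
      smul_eq_mul_diagonal]
  have hcU : star c * c = 1 := by
    have hmem : scalar n c ∈ unitaryGroup n 𝕜 := hc ▸ mul_mem (Unitary.star_mem hT) hU
    rw [← scalar_inj (n := n), map_mul, map_one, ← mem_unitaryGroup_iff'.mp hmem]
    simp [scalar_apply, star_eq_conjTranspose]
  exact ⟨c, CStarRing.norm_of_mem_unitary (Unitary.mem_iff_star_mul_self.mpr hcU), hUT⟩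

end SkolemNoether

end Matrix

/-- a unitary U on a bipartite system H_P ⊗ H_Q whose conjugation
action preserves both local operator algebras (for all t ≥ 0,
Ad_U^t(End(H_P) ⊗ 1) ⊆ End(H_P) ⊗ 1 and Ad_U^t(1 ⊗ End(H_Q)) ⊆ 1 ⊗ End(H_Q))
is a tensor product U = c • (V ⊗ W) of local unitaries, up to a global phase c. -/
theorem local_algebra_preserving_unitary_is_product
    {p q : Type*} [Fintype p] [DecidableEq p] [Fintype q] [DecidableEq q]
    (U : Matrix (p × q) (p × q) ℂ)
    (hU : U ∈ Matrix.unitaryGroup (p × q) ℂ)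
    (hP : ∀ (t : ℕ) (m : Matrix p p ℂ),
      ∃ m' : Matrix p p ℂ,
        U ^ t * (m ⊗ₖ (1 : Matrix q q ℂ)) * (star U) ^ t = m' ⊗ₖ (1 : Matrix q q ℂ))
    (hQ : ∀ (t : ℕ) (n : Matrix q q ℂ),
      ∃ n' : Matrix q q ℂ,
        U ^ t * ((1 : Matrix p p ℂ) ⊗ₖ n) * (star U) ^ t = (1 : Matrix p p ℂ) ⊗ₖ n') :
    ∃ (c : ℂ) (V : Matrix p p ℂ) (W : Matrix q q ℂ),
      ‖c‖ = 1 ∧ V ∈ Matrix.unitaryGroup p ℂ ∧ W ∈ Matrix.unitaryGroup q ℂ ∧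
        U = c • (V ⊗ₖ W) := by
  rcases isEmpty_or_nonempty (p × q) with h | h
  · exact ⟨1, 1, 1, norm_one, one_mem _, one_mem _, Subsingleton.elim _ _⟩
  obtain ⟨_, _⟩ := nonempty_prod.mp h
  obtain ⟨V, hV, hUV⟩ := exists_mem_unitaryGroup_conj_eq_of_conj_mem_range
    (kroneckerOneStarAlgHom q) kroneckerOneStarAlgHom_injective hU fun a => by
      simpa using hP 1 a
  obtain ⟨W, hW, hUW⟩ := exists_mem_unitaryGroup_conj_eq_of_conj_mem_range
    (oneKroneckerStarAlgHom p) oneKroneckerStarAlgHom_injective hU fun b => by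
      simpa using hQ 1 b
  obtain ⟨c, hc, hUc⟩ := exists_norm_eq_one_smul_of_conj_single_eq hU
    (kronecker_mem_unitary hV hW) fun ⟨i, k⟩ ⟨j, l⟩ => by
      simpa [single_kronecker_single] using
        conj_kronecker_eq_of_conj_kronecker_one hU hUV hUW (single i j 1) (single k l 1)
  exact ⟨c, V, W, hc, hV, hW, hUc⟩
end
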